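/- Let (R, 𝔪) be a commutative local ring with unity which is zero dimensional (every prime ideal of R is maximal) and has finite residue field R/𝔪. Then R has finite index of nilpotency (there exists a positive integer r such that aʳ = 0 for every nilpotent a ∈ R) if and only if the group of units R* has finite exponent (there exists a positive integer m such that uᵐ = 1 for every unit u ∈ R). -/

import Mathlib

open IsLocalRing

lemma aux_step {R : Type*} [CommRing R] (pn i : ℕ) (hi : 1 ≤ i) (x : R)
    (h : ((pn : R)) ^ i ∣ x - 1) : ((pn : R)) ^ (i + 1) ∣ x ^ pn - 1 := by
  obtain ⟨d, hd⟩ := h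
  have hsum : ((pn : R)) ^ i ∣ (∑ j ∈ Finset.range pn, x ^ j) - (pn : R) := by
    have h1 : (∑ j ∈ Finset.range pn, x ^ j) - (pn : R)
        = ∑ j ∈ Finset.range pn, (x ^ j - 1) := by
      rw [Finset.sum_sub_distrib]; simp
    rw [h1]
    refine Finset.dvd_sum fun j _ => dvd_trans ⟨d, hd⟩ ?_
    simpa using sub_dvd_pow_sub_pow x 1 j
  obtain ⟨c, hc⟩ := hsum
  have hgeom : x ^ pn - 1 = (∑ j ∈ Finset.range pn, x ^ j) * (x - 1) :=
    (geom_sum_mul x pn).symm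
  have key : x ^ pn - 1 = (pn : R) ^ (i + 1) * d + (pn : R) ^ (i + i) * (c * d) := by
    rw [hgeom, hd]
    have h2 : (∑ j ∈ Finset.range pn, x ^ j) = (pn : R) + (pn : R) ^ i * c := by
      linear_combination hc
    rw [h2]; ring
  rw [key]
  exact dvd_add (dvd_mul_right _ d) ((pow_dvd_pow _ (by omega)).mul_right _)

lemma aux_iter {R : Type*} [CommRing R] (pn : ℕ) (x : R) (h : (pn : R) ∣ x - 1) :
    ∀ j : ℕ, ((pn : R)) ^ (j + 1) ∣ x ^ (pn ^ j) - 1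
  | 0 => by simpa using h
  | (j + 1) => by
      have := aux_step pn (j + 1) (by omega) (x ^ (pn ^ j)) (aux_iter pn x h j)
      rwa [← pow_mul, ← pow_succ] at this

/-- **Proposition 2.3 (ii).** Let `(R, 𝔪)` be a zero dimensional commutative local ring with
finite residue field. Then `R` has finite index of nilpotency if and only if the group of
units `Rˣ` has finite exponent. -/
theorem stmt_6 {R : Type*} [CommRing R] [IsLocalRing R]
    (hdim : ∀ P : Ideal R, P.IsPrime → P.IsMaximal)
    (hres : Finite (IsLocalRing.ResidueField R)) :
    (∃ r : ℕ, 0 < r ∧ ∀ a : R, IsNilpotent a → a ^ r = 0) ↔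
    (∃ m : ℕ, 0 < m ∧ ∀ u : Rˣ, u ^ m = 1) := by
  classical
  set k := IsLocalRing.ResidueField R with hk
  haveI : Fintype k := Fintype.ofFinite k
  obtain ⟨p, hp⟩ := CharP.exists k
  haveI : CharP k p := hp
  have hpprime : p.Prime := CharP.char_is_prime k p
  haveI := Fact.mk hpprime
  -- nilpotent ↔ in maximal ideal
  have hnilrad : nilradical R = maximalIdeal R := by
    apply le_antisymm (nilradical_le_prime _)
    intro a ha
    by_contra hna
    rw [nilradical_eq_sInf, Ideal.mem_sInf] at hna
    push_neg at hna
    obtain ⟨P, hP, haP⟩ := hna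
    exact haP ((eq_maximalIdeal (hdim P hP)) ▸ ha)
  have hmemnil : ∀ a : R, a ∈ maximalIdeal R → IsNilpotent a := by
    intro a ha
    rw [← mem_nilradical, hnilrad]; exact ha
  -- p is nilpotent in R
  have hpmem : (p : R) ∈ maximalIdeal R := by
    rw [← residue_eq_zero_iff, map_natCast]
    exact CharP.cast_eq_zero k p
  have hpnil : IsNilpotent (p : R) := hmemnil _ hpmem
  -- the quotient S = R/pR
  set I : Ideal R := Ideal.span {(p : R)} with hI
  set S := R ⧸ I with hS
  have hIle : I ≤ maximalIdeal R := by
    rw [hI, Ideal.span_le, Set.singleton_subset_iff]; exact hpmem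
  have hInetop : I ≠ ⊤ := fun h => (maximalIdeal.isMaximal R).ne_top (top_le_iff.mp (h ▸ hIle))
  haveI : Nontrivial S := Ideal.Quotient.nontrivial_iff.mpr hInetop
  have hpS : (p : S) = 0 := by
    rw [← map_natCast (Ideal.Quotient.mk I), Ideal.Quotient.eq_zero_iff_mem]
    exact Ideal.subset_span rfl
  haveI hcharS : CharP S p := by
    have hdvd : ringChar S ∣ p := ringChar.dvd hpS
    rcases (hpprime.eq_one_or_self_of_dvd _ hdvd) with h1 | h1
    · exfalso
      have h0 : (1 : S) = 0 := by
        have := (ringChar.spec S 1).mpr (by rw [h1])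
        simpa using this
      exact one_ne_zero h0
    · exact h1 ▸ ringChar.charP S
  have hple : 2 ≤ p := hpprime.two_le
  constructor
  · -- finite nilpotency index → finite exponent of units
    rintro ⟨r, hr, hbound⟩
    have hpr : (p : R) ^ r = 0 := hbound _ hpnil
    set q := Fintype.card k with hq
    have hq1 : 1 < q := Fintype.one_lt_card
    refine ⟨(q - 1) * (p ^ r * p ^ (r - 1)),
      Nat.mul_pos (by omega) (Nat.mul_pos (by positivity) (by positivity)), ?_⟩
    intro u
    set n : R := (u : R) ^ (q - 1) - 1 with hn
    have hnm : n ∈ maximalIdeal R := by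
      rw [← residue_eq_zero_iff, hn, map_sub, map_pow, map_one]
      have hne : residue R (u : R) ≠ 0 := by
        intro h0
        have hiu : IsUnit (residue R (u : R)) := (IsUnit.map _ u.isUnit)
        rw [h0] at hiu
        exact hiu.ne_zero rfl
      rw [FiniteField.pow_card_sub_one_eq_one _ hne]; ring
    have hnnil : IsNilpotent n := hmemnil _ hnm
    have hnr : n ^ r = 0 := hbound _ hnnil
    -- in S: (1+n)^(p^r) = 1
    have hfrob : (p : R) ∣ (1 + n) ^ (p ^ r) - 1 := by
      rw [← Ideal.mem_span_singleton, ← hI, ← Ideal.Quotient.eq_zero_iff_mem]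
      rw [map_sub, map_one, map_pow, map_add, map_one, add_pow_char_pow, one_pow, ← map_pow]
      have hnpr : n ^ p ^ r = 0 := by
        have hsplit : n ^ r * n ^ (p ^ r - r) = n ^ p ^ r := by
          rw [← pow_add]
          congr 1
          have : r < p ^ r := Nat.lt_pow_self (n := r) hple
          omega
        rw [← hsplit, hnr, zero_mul]
      rw [hnpr]; simp
    have hit := aux_iter p ((1 + n) ^ (p ^ r)) hfrob (r - 1)
    rw [← pow_mul] at hit
    have hexp : (r - 1 + 1) = r := by omega
    rw [hexp, hpr, zero_dvd_iff, sub_eq_zero] at hit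
    have h1n : (1 : R) + n = (u : R) ^ (q - 1) := by rw [hn]; ring
    have hx : ((u : R)) ^ ((q - 1) * (p ^ r * p ^ (r - 1))) = 1 := by
      rw [pow_mul, ← h1n]; exact hit
    rw [← Units.val_eq_one, Units.val_pow_eq_pow_val]
    exact hx
  · -- finite exponent of units → finite nilpotency index
    rintro ⟨m, hm, hu⟩
    obtain ⟨s, hs⟩ := hpnil
    set kk := m.factorization p with hkk
    set m' := m / p ^ kk with hm'def
    have hmm : p ^ kk * m' = m := Nat.ordProj_mul_ordCompl_eq_self m p
    have hpm' : ¬ p ∣ m' := Nat.not_dvd_ordCompl hpprime hm.ne'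
    have hm'unit : IsUnit ((m' : R)) := by
      refine notMem_maximalIdeal.mp ?_
      intro hmem
      have h0 : residue R ((m' : R)) = 0 := (residue_eq_zero_iff _).mpr hmem
      rw [map_natCast] at h0
      exact hpm' ((CharP.cast_eq_zero_iff k p m').mp h0)
    refine ⟨p ^ kk * (s + 1), Nat.mul_pos (by positivity) (by omega), ?_⟩
    intro a ha
    have hun : IsUnit (1 + a) := ha.isUnit_one_add
    obtain ⟨v, hv⟩ := hun
    have hvm : ((1 + a) : R) ^ m = 1 := by
      rw [← hv, ← Units.val_pow_eq_pow_val, hu v, Units.val_one]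
    set π := Ideal.Quotient.mk I with hπ
    set b : S := π (a ^ (p ^ kk)) with hb'
    have hb : (1 + π a) ^ (p ^ kk) = 1 + b := by
      rw [add_pow_char_pow, one_pow, hb', map_pow]
    have hbm' : (1 + b) ^ m' = 1 := by
      rw [← hb, ← pow_mul, hmm]
      have h1 : (1 : S) + π a = π (1 + a) := by rw [map_add, map_one]
      rw [h1, ← map_pow, hvm, map_one]
    have hgeo : (∑ j ∈ Finset.range m', (1 + b) ^ j) * b = 0 := by
      have := geom_sum_mul (1 + b) m'
      simpa [hbm'] using this
    have hdvd : b ∣ (∑ j ∈ Finset.range m', (1 + b) ^ j) - (m' : S) := by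
      have h1 : (∑ j ∈ Finset.range m', (1 + b) ^ j) - (m' : S)
          = ∑ j ∈ Finset.range m', ((1 + b) ^ j - 1) := by
        rw [Finset.sum_sub_distrib]; simp
      rw [h1]
      refine Finset.dvd_sum fun j _ => ?_
      have := sub_dvd_pow_sub_pow (1 + b) 1 j
      simpa using this
    obtain ⟨c, hc⟩ := hdvd
    have hbnil : IsNilpotent b := by
      obtain ⟨t, ht⟩ := ha
      refine ⟨t, ?_⟩
      rw [hb', ← map_pow, ← pow_mul, mul_comm, pow_mul, ht, zero_pow (by positivity), map_zero]
    have hm'S : IsUnit ((m' : S)) := by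
      have := hm'unit.map π
      rwa [map_natCast] at this
    have hSumUnit : IsUnit (∑ j ∈ Finset.range m', (1 + b) ^ j) := by
      have heq : (∑ j ∈ Finset.range m', (1 + b) ^ j) = (m' : S) + b * c := by
        linear_combination hc
      rw [heq]
      exact IsNilpotent.isUnit_add_left_of_commute ((Commute.all b c).isNilpotent_mul_right hbnil) hm'S (Commute.all _ _)
    obtain ⟨w, hw⟩ := hSumUnit
    have hb0 : b = 0 := by
      have h0 : (w : S) * b = 0 := by rw [hw]; exact hgeo
      exact (Units.mul_right_eq_zero w).mp h0
    have hmem : a ^ (p ^ kk) ∈ I := by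
      rw [← Ideal.Quotient.eq_zero_iff_mem]
      exact hb0
    rw [hI, Ideal.mem_span_singleton] at hmem
    obtain ⟨c2, hc2⟩ := hmem
    rw [pow_mul, hc2, mul_pow, pow_succ, hs, zero_mul, zero_mul]
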